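/- Let U be the union of those connected components of A ∪ B (in the Dynkin graph on Π) that do not meet A, and set B′ = B \ U. Suppose every connected component of A ∪ B′ consists of simple roots of one and the same length. Then every (A,B′)-root is significant, and ℓ(A,B) equals the number of positive roots δ with C(δ) ⊆ A ∪ B′ minus the number of positive roots δ with C(δ) ⊆ B′. -/

import Mathlib

open scoped RealInnerProductSpace
open scoped Classical

/-- A reduced crystallographic root system `roots` spanning a real inner product
space `V`, with a chosen set `pos` of positive roots, the corresponding base
`simple` of simple roots, and the coefficient function `coeff`, where
`coeff ξ α = c_α(ξ)` is the coefficient of the simple root `α` in the unique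
expression `ξ = ∑_{α ∈ simple} c_α(ξ) • α`. -/
structure RootSystemData (V : Type*) [NormedAddCommGroup V] [InnerProductSpace ℝ V] where
  roots : Finset V
  pos : Finset V
  simple : Finset V
  coeff : V → V → ℝ
  pos_subset : pos ⊆ roots
  simple_subset : simple ⊆ pos
  root_ne_zero : ∀ δ ∈ roots, δ ≠ (0 : V)
  neg_mem : ∀ δ ∈ roots, -δ ∈ roots
  pos_or_neg : ∀ δ ∈ roots, δ ∈ pos ∨ -δ ∈ pos
  pos_neg_not : ∀ δ ∈ pos, -δ ∉ pos
  reduced : ∀ δ ∈ roots, ∀ t : ℝ, t • δ ∈ roots → t = 1 ∨ t = -1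
  crystallographic : ∀ δ ∈ roots, ∀ ε ∈ roots, ∃ n : ℤ, 2 * ⟪δ, ε⟫ / ⟪ε, ε⟫ = (n : ℝ)
  reflect_mem : ∀ δ ∈ roots, ∀ ε ∈ roots, δ - (2 * ⟪δ, ε⟫ / ⟪ε, ε⟫) • ε ∈ roots
  span_eq_top : Submodule.span ℝ (simple : Set V) = ⊤
  linearIndependent : LinearIndependent ℝ (fun α : simple => (α : V))
  coeff_spec : ∀ ξ : V, ξ = ∑ α ∈ simple, coeff ξ α • α
  pos_coeff_nonneg : ∀ δ ∈ pos, ∀ α ∈ simple, 0 ≤ coeff δ α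

namespace RootSystemData

variable {V : Type*} [NormedAddCommGroup V] [InnerProductSpace ℝ V]

/-- The support `C(ξ)` of `ξ`: the set of simple roots with nonzero coefficient in `ξ`. -/
noncomputable def support (R : RootSystemData V) (ξ : V) : Finset V :=
  R.simple.filter fun α => R.coeff ξ α ≠ 0

/-- The coefficientwise partial order: `x ≤ y` iff `c_α(x) ≤ c_α(y)` for all simple `α`. -/
def cle (R : RootSystemData V) (x y : V) : Prop :=
  ∀ α ∈ R.simple, R.coeff x α ≤ R.coeff y α

/-- An `(A,B)`-root: a positive root whose support lies in `A ∪ B` and which has a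
strictly positive coefficient at some element of `A`. -/
def IsABRoot (R : RootSystemData V) (A B : Finset V) (δ : V) : Prop :=
  δ ∈ R.pos ∧ R.support δ ⊆ A ∪ B ∧ ∃ α₀ ∈ A, 0 < R.coeff δ α₀

/-- A significant `(A,B)`-root. -/
def IsSignificant (R : RootSystemData V) (A B : Finset V) (δ : V) : Prop :=
  R.IsABRoot A B δ ∧ ∃ σ : V, R.IsABRoot A B σ ∧ R.cle σ δ ∧
    (∑ β ∈ B, R.coeff σ β * ⟪β, β⟫) ≤ (∑ α ∈ A, R.coeff σ α * ⟪α, α⟫) ∧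
    (∀ x ∈ R.support (δ - σ), ∀ y ∈ R.support (δ - σ), ‖x‖ = ‖y‖) ∧
    (∀ x ∈ R.support (δ - σ), ‖x‖ ≤ ‖σ‖)

/-- `ℓ(A,B)`, the number of significant `(A,B)`-roots. -/
noncomputable def ell (R : RootSystemData V) (A B : Finset V) : ℕ :=
  (R.pos.filter fun δ => R.IsSignificant A B δ).card

/-- `γ`, the half-sum of the positive roots. -/
noncomputable def gamma (R : RootSystemData V) : V :=
  (2 : ℝ)⁻¹ • ∑ δ ∈ R.pos, δ

/-- A weight: `2(β,α)/(α,α) ∈ ℤ` for all roots `α`. -/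
def IsWeight (R : RootSystemData V) (β : V) : Prop :=
  ∀ δ ∈ R.roots, ∃ n : ℤ, 2 * ⟪β, δ⟫ / ⟪δ, δ⟫ = (n : ℝ)

/-- A regular weight: not orthogonal to any positive root. -/
def IsRegular (R : RootSystemData V) (lam : V) : Prop :=
  ∀ δ ∈ R.pos, ⟪lam, δ⟫ ≠ 0

end RootSystemData


/-- `x` and `y` are connected within `S ⊆ Π` in the Dynkin graph (edges between simple
roots with nonzero inner product). -/
def RootSystemData.connTo {V : Type*} [NormedAddCommGroup V] [InnerProductSpace ℝ V]
    (R : RootSystemData V) (S : Finset V) (x y : V) : Prop :=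
  ∃ (k : ℕ) (p : ℕ → V), p 0 = x ∧ p k = y ∧ (∀ i ≤ k, p i ∈ S) ∧
    ∀ i < k, ⟪p i, p (i + 1)⟫ ≠ 0

namespace RootSystemData

variable {V : Type*} [NormedAddCommGroup V] [InnerProductSpace ℝ V] (R : RootSystemData V)

theorem coeff_unique (ξ : V) (f : V → ℝ) (hf : ξ = ∑ α ∈ R.simple, f α • α) :
    ∀ β ∈ R.simple, f β = R.coeff ξ β := by
  intro β hβ
  have h0 : ∑ α ∈ R.simple, (f α - R.coeff ξ α) • α = 0 := by
    have := R.coeff_spec ξ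
    simp [sub_smul, Finset.sum_sub_distrib, ← hf, ← this]
  have h1 : ∑ x ∈ R.simple.attach, (f x.1 - R.coeff ξ x.1) • (x : V) = 0 := by
    rw [Finset.sum_attach R.simple (fun α => (f α - R.coeff ξ α) • α)]; exact h0
  have := linearIndependent_iff'.mp R.linearIndependent Finset.univ
    (fun x => f x.1 - R.coeff ξ x.1) (by rwa [Finset.univ_eq_attach])
    ⟨β, hβ⟩ (Finset.mem_univ _)
  simpa [sub_eq_zero] using this

theorem coeff_sub (x y : V) (β : V) (hβ : β ∈ R.simple) :
    R.coeff (x - y) β = R.coeff x β - R.coeff y β := by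
  have := R.coeff_unique (x - y) (fun α => R.coeff x α - R.coeff y α) ?_ β hβ
  · exact this.symm
  · conv_lhs => rw [R.coeff_spec x, R.coeff_spec y]
    simp [sub_smul, Finset.sum_sub_distrib]

theorem coeff_neg (x : V) (β : V) (hβ : β ∈ R.simple) : R.coeff (-x) β = - R.coeff x β := by
  have := R.coeff_sub 0 x β hβ
  rw [zero_sub] at this
  have h0 : R.coeff 0 β = 0 := by
    have := R.coeff_unique 0 (fun _ => 0) (by simp) β hβ
    exact this.symm
  rw [this, h0, zero_sub]

theorem coeff_smul (t : ℝ) (x : V) (β : V) (hβ : β ∈ R.simple) :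
    R.coeff (t • x) β = t * R.coeff x β := by
  have := R.coeff_unique (t • x) (fun α => t * R.coeff x α) ?_ β hβ
  · exact this.symm
  · conv_lhs => rw [R.coeff_spec x]
    simp [Finset.smul_sum, mul_smul]

theorem coeff_simple {α : V} (hα : α ∈ R.simple) (β : V) (hβ : β ∈ R.simple) :
    R.coeff α β = if β = α then 1 else 0 := by
  have := R.coeff_unique α (fun γ => if γ = α then 1 else 0) ?_ β hβ
  · exact this.symm
  · simp [hα]

theorem simple_mem_roots {α : V} (hα : α ∈ R.simple) : α ∈ R.roots :=
  R.pos_subset (R.simple_subset hα)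

theorem simple_inner_self_pos {α : V} (hα : α ∈ R.simple) : (0:ℝ) < ⟪α, α⟫ := by
  have h := R.root_ne_zero α (R.simple_mem_roots hα)
  have h2 : ⟪α, α⟫ ≠ (0:ℝ) := fun hc => h ((inner_self_eq_zero (𝕜 := ℝ)).mp hc)
  exact lt_of_le_of_ne real_inner_self_nonneg (Ne.symm h2)

theorem mem_support_iff {ξ α : V} : α ∈ R.support ξ ↔ α ∈ R.simple ∧ R.coeff ξ α ≠ 0 := by
  simp [support]

theorem support_subset_simple (ξ : V) : R.support ξ ⊆ R.simple :=
  Finset.filter_subset _ _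

end RootSystemData
namespace RootSystemData

variable {V : Type*} [NormedAddCommGroup V] [InnerProductSpace ℝ V] (R : RootSystemData V)

theorem connTo_refl {S : Finset V} {x : V} (hx : x ∈ S) : R.connTo S x x :=
  ⟨0, fun _ => x, rfl, rfl, fun i _ => hx, fun i hi => absurd hi (Nat.not_lt_zero i)⟩

theorem connTo_mono {S T : Finset V} (hST : S ⊆ T) {x y : V} (h : R.connTo S x y) :
    R.connTo T x y := by
  obtain ⟨k, p, h0, hk, hmem, hadj⟩ := h
  exact ⟨k, p, h0, hk, fun i hi => hST (hmem i hi), hadj⟩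

theorem connTo_adj {S : Finset V} {x y : V} (hx : x ∈ S) (hy : y ∈ S)
    (hxy : ⟪x, y⟫ ≠ (0:ℝ)) : R.connTo S x y := by
  refine ⟨1, fun i => if i = 0 then x else y, by simp, by simp, ?_, ?_⟩
  · intro i hi
    by_cases h : i = 0 <;> simp [h, hx, hy]
  · intro i hi
    interval_cases i
    simpa using hxy

theorem connTo_symm {S : Finset V} {x y : V} (h : R.connTo S x y) : R.connTo S y x := by
  obtain ⟨k, p, h0, hk, hmem, hadj⟩ := h
  refine ⟨k, fun i => p (k - i), by simp [hk], by simp [h0], ?_, ?_⟩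
  · intro i hi
    exact hmem _ (Nat.sub_le _ _)
  · intro i hi
    have h1 : k - i = (k - (i+1)) + 1 := by omega
    simp only []
    rw [h1]
    have := hadj (k - (i+1)) (by omega)
    rw [real_inner_comm] at this
    exact this

theorem connTo_trans {S : Finset V} {x y z : V} (h1 : R.connTo S x y) (h2 : R.connTo S y z) :
    R.connTo S x z := by
  obtain ⟨k, p, hp0, hpk, hpmem, hpadj⟩ := h1
  obtain ⟨m, q, hq0, hqk, hqmem, hqadj⟩ := h2
  refine ⟨k + m, fun i => if i ≤ k then p i else q (i - k), by simp [hp0], ?_, ?_, ?_⟩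
  · by_cases h : m = 0
    · subst h; simp [hpk, ← hq0, hqk]
    · have : ¬ (k + m ≤ k) := by omega
      simp [this, hqk]
  · intro i hi
    by_cases h : i ≤ k
    · simp only [h, if_true]; exact hpmem i h
    · simp only [h, if_false]; exact hqmem (i - k) (by omega)
  · intro i hi
    by_cases h : i + 1 ≤ k
    · have h' : i ≤ k := by omega
      simp only [h, h', if_true]
      exact hpadj i (by omega)
    · by_cases h' : i ≤ k
      · have hik : i = k := by omega
        simp only [h, h', if_true, if_false]
        subst hik
        rw [hpk, ← hq0]
        have : i + 1 - i = 1 := by omega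
        rw [this]
        exact hqadj 0 (by omega)
      · simp only [h, h', if_false]
        have : i + 1 - k = (i - k) + 1 := by omega
        rw [this]
        exact hqadj (i - k) (by omega)

theorem simple_inner_nonpos {α β : V} (hα : α ∈ R.simple) (hβ : β ∈ R.simple)
    (hne : α ≠ β) : ⟪α, β⟫ ≤ (0:ℝ) := by
  by_contra hpos
  push_neg at hpos
  set t : ℝ := 2 * ⟪α, β⟫ / ⟪β, β⟫ with ht
  have htpos : 0 < t := by
    apply div_pos (by linarith) (R.simple_inner_self_pos hβ)
  have hρ : α - t • β ∈ R.roots :=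
    R.reflect_mem α (R.simple_mem_roots hα) β (R.simple_mem_roots hβ)
  have hcα : R.coeff (α - t • β) α = 1 := by
    rw [R.coeff_sub _ _ _ hα, R.coeff_smul _ _ _ hα, R.coeff_simple hα α hα,
      R.coeff_simple hβ α hα]
    simp [hne]
  have hcβ : R.coeff (α - t • β) β = -t := by
    rw [R.coeff_sub _ _ _ hβ, R.coeff_smul _ _ _ hβ, R.coeff_simple hα β hβ,
      R.coeff_simple hβ β hβ]
    simp [Ne.symm hne]
  rcases R.pos_or_neg _ hρ with hp | hp
  · have := R.pos_coeff_nonneg _ hp β hβ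
    rw [hcβ] at this; linarith
  · have := R.pos_coeff_nonneg _ hp α hα
    rw [R.coeff_neg _ _ hα, hcα] at this; linarith

end RootSystemData
namespace RootSystemData

variable {V : Type*} [NormedAddCommGroup V] [InnerProductSpace ℝ V] (R : RootSystemData V)

/-- The height of `ξ`: the sum of its coefficients. -/
noncomputable def height (ξ : V) : ℝ := ∑ α ∈ R.simple, R.coeff ξ α

theorem inner_eq_coeff_sum (ξ x : V) : ⟪ξ, x⟫ = ∑ α ∈ R.simple, R.coeff ξ α * ⟪α, x⟫ := by
  conv_lhs => rw [R.coeff_spec ξ]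
  rw [sum_inner]
  exact Finset.sum_congr rfl fun α _ => real_inner_smul_left _ _ _

theorem master : ∀ n : ℕ, ∀ δ ∈ R.pos,
    (R.pos.filter fun ε => R.height ε < R.height δ).card = n →
    (∀ β ∈ R.simple, ∃ m : ℤ, R.coeff δ β = (m : ℝ)) ∧
    (∀ x ∈ R.support δ, ∀ y ∈ R.support δ, R.connTo (R.support δ) x y) := by
  intro n
  induction n using Nat.strong_induction_on with
  | _ n ih =>
  intro δ hδ hcard
  by_cases hδs : δ ∈ R.simple
  · constructor
    · intro β hβ
      refine ⟨if β = δ then 1 else 0, ?_⟩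
      rw [R.coeff_simple hδs β hβ]
      split <;> simp
    · intro x hx y hy
      have hx' : x = δ := by
        obtain ⟨hxs, hxc⟩ := R.mem_support_iff.mp hx
        by_contra hne
        rw [R.coeff_simple hδs x hxs] at hxc
        simp [hne] at hxc
      have hy' : y = δ := by
        obtain ⟨hys, hyc⟩ := R.mem_support_iff.mp hy
        by_contra hne
        rw [R.coeff_simple hδs y hys] at hyc
        simp [hne] at hyc
      subst hx'; subst hy'
      exact R.connTo_refl hx
  · -- main induction step
    have hδroots : δ ∈ R.roots := R.pos_subset hδ
    have hne0 : δ ≠ 0 := R.root_ne_zero δ hδroots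
    have hdd : (0:ℝ) < ⟪δ, δ⟫ := by
      have h2 : ⟪δ, δ⟫ ≠ (0:ℝ) := fun hc => hne0 ((inner_self_eq_zero (𝕜 := ℝ)).mp hc)
      exact lt_of_le_of_ne real_inner_self_nonneg (Ne.symm h2)
    -- find a simple root α with positive coefficient and positive inner product with δ
    have hsum : ⟪δ, δ⟫ = ∑ α ∈ R.simple, R.coeff δ α * ⟪α, δ⟫ := R.inner_eq_coeff_sum δ δ
    have hex : ∃ α ∈ R.simple, 0 < R.coeff δ α * ⟪α, δ⟫ := by
      by_contra hc
      push_neg at hc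
      have : ∑ α ∈ R.simple, R.coeff δ α * ⟪α, δ⟫ ≤ 0 := Finset.sum_nonpos hc
      linarith [hsum ▸ hdd]
    obtain ⟨α, hα, hprod⟩ := hex
    have hcoefnn : 0 ≤ R.coeff δ α := R.pos_coeff_nonneg δ hδ α hα
    have hinnerpos : 0 < ⟪α, δ⟫ := by
      rcases lt_or_ge 0 ⟪α, δ⟫ with h | h
      · exact h
      · nlinarith
    have hcα : 0 < R.coeff δ α := by nlinarith
    have hαroots : α ∈ R.roots := R.simple_mem_roots hα
    have haa : (0:ℝ) < ⟪α, α⟫ := R.simple_inner_self_pos hα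
    set t : ℝ := 2 * ⟪δ, α⟫ / ⟪α, α⟫ with htdef
    have hδα : ⟪δ, α⟫ = ⟪α, δ⟫ := real_inner_comm _ _
    have htpos : 0 < t := div_pos (by rw [hδα]; linarith) haa
    obtain ⟨nt, hnt⟩ := R.crystallographic δ hδroots α hαroots
    set ρ : V := δ - t • α with hρdef
    have hρroots : ρ ∈ R.roots := R.reflect_mem δ hδroots α hαroots
    have hcoeffρ : ∀ γ ∈ R.simple,
        R.coeff ρ γ = R.coeff δ γ - t * (if γ = α then 1 else 0) := by
      intro γ hγ
      rw [hρdef, R.coeff_sub _ _ _ hγ, R.coeff_smul _ _ _ hγ, R.coeff_simple hα γ hγ]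
    -- δ is not a multiple of α
    have hexβ : ∃ β ∈ R.simple, β ≠ α ∧ 0 < R.coeff δ β := by
      by_contra hc
      push_neg at hc
      have hzero : ∀ β ∈ R.simple, β ≠ α → R.coeff δ β = 0 := fun β hβ hne =>
        le_antisymm (hc β hβ hne) (R.pos_coeff_nonneg δ hδ β hβ)
      have hδα' : δ = R.coeff δ α • α := by
        conv_lhs => rw [R.coeff_spec δ]
        rw [Finset.sum_eq_single α (fun β hβ hne => by rw [hzero β hβ hne, zero_smul])
          (fun h => absurd hα h)]
      rcases R.reduced α hαroots (R.coeff δ α) (by rw [← hδα']; exact hδroots) with h1 | h1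
      · exact hδs (by rw [hδα', h1, one_smul]; exact hα)
      · rw [h1] at hcα; linarith
    obtain ⟨β, hβ, hβα, hβpos⟩ := hexβ
    have hρβ : R.coeff ρ β = R.coeff δ β := by
      rw [hcoeffρ β hβ]; simp [hβα]
    have hρpos : ρ ∈ R.pos := by
      rcases R.pos_or_neg ρ hρroots with h | h
      · exact h
      · exfalso
        have := R.pos_coeff_nonneg _ h β hβ
        rw [R.coeff_neg _ _ hβ, hρβ] at this
        linarith
    have hht : R.height ρ = R.height δ - t := by
      unfold height
      rw [Finset.sum_congr rfl hcoeffρ, Finset.sum_sub_distrib, ← Finset.mul_sum,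
        Finset.sum_ite_eq' R.simple α (fun _ => (1:ℝ)), if_pos hα, mul_one]
    have hhtlt : R.height ρ < R.height δ := by rw [hht]; linarith
    -- apply the induction hypothesis to ρ
    have hsub : (R.pos.filter fun ε => R.height ε < R.height ρ) ⊆
        (R.pos.filter fun ε => R.height ε < R.height δ) := by
      intro ε hε
      rw [Finset.mem_filter] at hε ⊢
      exact ⟨hε.1, lt_trans hε.2 hhtlt⟩
    have hρmem : ρ ∈ (R.pos.filter fun ε => R.height ε < R.height δ) :=
      Finset.mem_filter.mpr ⟨hρpos, hhtlt⟩
    have hρnmem : ρ ∉ (R.pos.filter fun ε => R.height ε < R.height ρ) := by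
      rw [Finset.mem_filter]; push_neg; intro _; exact le_refl _
    have hcardlt : (R.pos.filter fun ε => R.height ε < R.height ρ).card < n := by
      rw [← hcard]
      exact Finset.card_lt_card (Finset.ssubset_iff_of_subset hsub |>.mpr ⟨ρ, hρmem, hρnmem⟩)
    obtain ⟨ihint, ihconn⟩ := ih _ hcardlt ρ hρpos rfl
    constructor
    · -- integrality
      intro γ hγ
      obtain ⟨m, hm⟩ := ihint γ hγ
      by_cases hγα : γ = α
      · refine ⟨m + nt, ?_⟩
        have := hcoeffρ γ hγ
        rw [if_pos hγα, mul_one] at this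
        have ht' : t = (nt : ℝ) := by rw [htdef]; exact hnt
        push_cast
        linarith [hm ▸ this]
      · refine ⟨m, ?_⟩
        have := hcoeffρ γ hγ
        rw [if_neg hγα, mul_zero, sub_zero] at this
        rw [← this, hm]
    · -- connectivity
      have hαsupp : α ∈ R.support δ := R.mem_support_iff.mpr ⟨hα, ne_of_gt hcα⟩
      have hsuppsub : R.support ρ ⊆ R.support δ := by
        intro γ hγ
        obtain ⟨hγs, hγc⟩ := R.mem_support_iff.mp hγ
        by_cases hγα : γ = α
        · subst hγα; exact hαsupp
        · refine R.mem_support_iff.mpr ⟨hγs, ?_⟩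
          have := hcoeffρ γ hγs
          rw [if_neg hγα, mul_zero, sub_zero] at this
          rwa [← this]
      have hconnα : ∀ x ∈ R.support δ, R.connTo (R.support δ) x α := by
        intro x hx
        by_cases hxα : x = α
        · subst hxα; exact R.connTo_refl hx
        · have hxρ : x ∈ R.support ρ := by
            obtain ⟨hxs, hxc⟩ := R.mem_support_iff.mp hx
            refine R.mem_support_iff.mpr ⟨hxs, ?_⟩
            have := hcoeffρ x hxs
            rw [if_neg hxα, mul_zero, sub_zero] at this
            rwa [this]
          by_cases hαρ : α ∈ R.support ρ
          · exact R.connTo_mono hsuppsub (ihconn x hxρ α hαρ)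
          · -- find γ ∈ support ρ adjacent to α
            have hρα : ⟪ρ, α⟫ = -⟪δ, α⟫ := by
              rw [hρdef, inner_sub_left, real_inner_smul_left, htdef]
              field_simp
              ring
            have hραne : ⟪ρ, α⟫ ≠ (0:ℝ) := by rw [hρα, hδα]; intro h; linarith
            have hρsum : ⟪ρ, α⟫ = ∑ γ ∈ R.simple, R.coeff ρ γ * ⟪γ, α⟫ :=
              R.inner_eq_coeff_sum ρ α
            have hexγ : ∃ γ ∈ R.simple, R.coeff ρ γ * ⟪γ, α⟫ ≠ 0 := by
              by_contra hc
              push_neg at hc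
              exact hραne (hρsum.trans (Finset.sum_eq_zero hc))
            obtain ⟨γ, hγs, hγne⟩ := hexγ
            have hγc : R.coeff ρ γ ≠ 0 := fun h => hγne (by rw [h, zero_mul])
            have hγα : ⟪γ, α⟫ ≠ (0:ℝ) := fun h => hγne (by rw [h, mul_zero])
            have hγρ : γ ∈ R.support ρ := R.mem_support_iff.mpr ⟨hγs, hγc⟩
            have h1 : R.connTo (R.support δ) x γ :=
              R.connTo_mono hsuppsub (ihconn x hxρ γ hγρ)
            have h2 : R.connTo (R.support δ) γ α :=
              R.connTo_adj (hsuppsub hγρ) hαsupp hγα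
            exact R.connTo_trans h1 h2
      intro x hx y hy
      exact R.connTo_trans (hconnα x hx) (R.connTo_symm (hconnα y hy))

theorem coeff_int {δ : V} (hδ : δ ∈ R.pos) {β : V} (hβ : β ∈ R.simple) :
    ∃ m : ℤ, R.coeff δ β = (m : ℝ) :=
  (R.master _ δ hδ rfl).1 β hβ

theorem support_conn {δ : V} (hδ : δ ∈ R.pos) :
    ∀ x ∈ R.support δ, ∀ y ∈ R.support δ, R.connTo (R.support δ) x y :=
  (R.master _ δ hδ rfl).2

theorem one_le_coeff {δ : V} (hδ : δ ∈ R.pos) {β : V} (hβ : β ∈ R.simple)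
    (hpos : 0 < R.coeff δ β) : 1 ≤ R.coeff δ β := by
  obtain ⟨m, hm⟩ := R.coeff_int hδ hβ
  rw [hm] at hpos ⊢
  exact_mod_cast (by exact_mod_cast hpos : (0:ℤ) < m)

end RootSystemData
/-- Let `U` be the union of the connected components of `A ∪ B` not meeting `A` and
`B′ = B \\ U`.  If every connected component of `A ∪ B′` consists of simple roots of one
and the same length, then every `(A,B′)`-root is significant, and `ℓ(A,B)` equals the
number of positive roots with support in `A ∪ B′` minus the number of positive roots with
support in `B′`. -/
theorem ell_eq_card_sub_card
    {V : Type*} [NormedAddCommGroup V] [InnerProductSpace ℝ V]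
    (R : RootSystemData V)
    (A B : Finset V) (hA : A ⊆ R.simple) (hB : B ⊆ R.simple) (hAB : Disjoint A B)
    (U B' : Finset V)
    (hU : U = (A ∪ B).filter fun x => ¬ ∃ a ∈ A, R.connTo (A ∪ B) x a)
    (hB' : B' = B \ U)
    (hlen : ∀ x ∈ A ∪ B', ∀ y ∈ A ∪ B', R.connTo (A ∪ B') x y → ‖x‖ = ‖y‖) :
    (∀ δ : V, R.IsABRoot A B' δ → R.IsSignificant A B' δ) ∧
    R.ell A B = (R.pos.filter fun δ => R.support δ ⊆ A ∪ B').card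
      - (R.pos.filter fun δ => R.support δ ⊆ B').card := by
  have hB'B : B' ⊆ B := by rw [hB']; exact Finset.sdiff_subset
  have hAB' : Disjoint A B' := hAB.mono_right hB'B
  -- Key lemma: the support of any (A,B)-root lies in A ∪ B'
  have K1 : ∀ δ : V, R.IsABRoot A B δ → R.support δ ⊆ A ∪ B' := by
    intro δ ⟨hpos, hsupp, α₀, hα₀A, hα₀c⟩
    have hα₀s : α₀ ∈ R.simple := hA hα₀A
    have hα₀supp : α₀ ∈ R.support δ := R.mem_support_iff.mpr ⟨hα₀s, ne_of_gt hα₀c⟩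
    intro x hx
    have hconn : R.connTo (A ∪ B) x α₀ :=
      R.connTo_mono hsupp (R.support_conn hpos x hx α₀ hα₀supp)
    have hxAB : x ∈ A ∪ B := hsupp hx
    rcases Finset.mem_union.mp hxAB with hxA | hxB
    · exact Finset.mem_union_left _ hxA
    · refine Finset.mem_union_right _ ?_
      rw [hB', Finset.mem_sdiff]
      refine ⟨hxB, ?_⟩
      rw [hU, Finset.mem_filter]
      push_neg
      intro _
      exact ⟨α₀, hα₀A, hconn⟩
  -- Part 1: every (A,B')-root is significant
  have part1 : ∀ δ : V, R.IsABRoot A B' δ → R.IsSignificant A B' δ := by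
    intro δ hδ
    obtain ⟨hpos, hsupp, α₀, hα₀A, hα₀c⟩ := hδ
    have hα₀s : α₀ ∈ R.simple := hA hα₀A
    have hα₀supp : α₀ ∈ R.support δ := R.mem_support_iff.mpr ⟨hα₀s, ne_of_gt hα₀c⟩
    have hα₀nB' : α₀ ∉ B' := fun h => (Finset.disjoint_left.mp hAB' hα₀A) h
    refine ⟨⟨hpos, hsupp, α₀, hα₀A, hα₀c⟩, α₀, ?_, ?_, ?_, ?_, ?_⟩
    · -- α₀ is an (A,B')-root
      refine ⟨R.simple_subset hα₀s, ?_, α₀, hα₀A, ?_⟩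
      · intro x hx
        obtain ⟨hxs, hxc⟩ := R.mem_support_iff.mp hx
        rw [R.coeff_simple hα₀s x hxs] at hxc
        have : x = α₀ := by by_contra h; simp [h] at hxc
        subst this
        exact Finset.mem_union_left _ hα₀A
      · rw [R.coeff_simple hα₀s α₀ hα₀s]; simp
    · -- α₀ ≤ δ coefficientwise
      intro β hβ
      rw [R.coeff_simple hα₀s β hβ]
      split
      · next h => subst h; exact R.one_le_coeff hpos hβ hα₀c
      · exact R.pos_coeff_nonneg δ hpos β hβ
    · -- the sum inequality
      have hL : (∑ β ∈ B', R.coeff α₀ β * ⟪β, β⟫) = 0 := by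
        apply Finset.sum_eq_zero
        intro β hβB'
        rw [R.coeff_simple hα₀s β (hB (hB'B hβB'))]
        have : β ≠ α₀ := fun h => hα₀nB' (h ▸ hβB')
        simp [this]
      have hR : (∑ α ∈ A, R.coeff α₀ α * ⟪α, α⟫) = ⟪α₀, α₀⟫ := by
        have : ∀ α ∈ A, R.coeff α₀ α * ⟪α, α⟫ = if α = α₀ then ⟪α, α⟫ else 0 := by
          intro α hαA
          rw [R.coeff_simple hα₀s α (hA hαA)]
          split <;> simp
        rw [Finset.sum_congr rfl this, Finset.sum_ite_eq' A α₀ (fun α => ⟪α, α⟫),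
          if_pos hα₀A]
      rw [hL, hR]
      exact le_of_lt (R.simple_inner_self_pos hα₀s)
    · -- supports of δ - α₀ all have equal length
      have hsub : R.support (δ - α₀) ⊆ R.support δ := by
        intro x hx
        obtain ⟨hxs, hxc⟩ := R.mem_support_iff.mp hx
        rw [R.coeff_sub _ _ _ hxs, R.coeff_simple hα₀s x hxs] at hxc
        by_cases h : x = α₀
        · subst h; exact hα₀supp
        · rw [if_neg h, sub_zero] at hxc
          exact R.mem_support_iff.mpr ⟨hxs, hxc⟩
      intro x hx y hy
      have hx' := hsub hx
      have hy' := hsub hy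
      exact hlen x (hsupp hx') y (hsupp hy')
        (R.connTo_mono hsupp (R.support_conn hpos x hx' y hy'))
    · -- lengths bounded by ‖α₀‖
      have hsub : R.support (δ - α₀) ⊆ R.support δ := by
        intro x hx
        obtain ⟨hxs, hxc⟩ := R.mem_support_iff.mp hx
        rw [R.coeff_sub _ _ _ hxs, R.coeff_simple hα₀s x hxs] at hxc
        by_cases h : x = α₀
        · subst h; exact hα₀supp
        · rw [if_neg h, sub_zero] at hxc
          exact R.mem_support_iff.mpr ⟨hxs, hxc⟩
      intro x hx
      have hx' := hsub hx
      exact le_of_eq (hlen x (hsupp hx') α₀ (hsupp hα₀supp)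
        (R.connTo_mono hsupp (R.support_conn hpos x hx' α₀ hα₀supp)))
  refine ⟨part1, ?_⟩
  -- significant (A,B)-roots are exactly the (A,B')-roots
  have hfilter : (R.pos.filter fun δ => R.IsSignificant A B δ)
      = (R.pos.filter fun δ => R.IsABRoot A B' δ) := by
    apply Finset.filter_congr
    intro δ hδpos
    constructor
    · rintro ⟨hab, -⟩
      exact ⟨hab.1, K1 δ hab, hab.2.2⟩
    · intro hab'
      obtain ⟨hab1', σ, hσab', hcle, hsums, hlen1, hlen2⟩ := part1 δ hab'
      have toAB : ∀ ε : V, R.IsABRoot A B' ε → R.IsABRoot A B ε := by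
        intro ε ⟨h1, h2, h3⟩
        exact ⟨h1, h2.trans (Finset.union_subset_union_right hB'B), h3⟩
      refine ⟨toAB δ hab1', σ, toAB σ hσab', hcle, ?_, hlen1, hlen2⟩
      have : (∑ β ∈ B, R.coeff σ β * ⟪β, β⟫) = ∑ β ∈ B', R.coeff σ β * ⟪β, β⟫ := by
        symm
        apply Finset.sum_subset hB'B
        intro β hβB hβnB'
        have hβnAB' : β ∉ A ∪ B' := by
          rw [Finset.mem_union]
          push_neg
          exact ⟨fun h => (Finset.disjoint_left.mp hAB h) hβB, hβnB'⟩
        have : R.coeff σ β = 0 := by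
          by_contra hc
          exact hβnAB' (hσab'.2.1 (R.mem_support_iff.mpr ⟨hB hβB, hc⟩))
        rw [this, zero_mul]
      rw [this]
      exact hsums
  -- counting
  have hcount : (R.pos.filter fun δ => R.IsABRoot A B' δ)
      = (R.pos.filter fun δ => R.support δ ⊆ A ∪ B')
        \ (R.pos.filter fun δ => R.support δ ⊆ B') := by
    ext δ
    simp only [Finset.mem_sdiff, Finset.mem_filter]; simp only [RootSystemData.IsABRoot]
    constructor
    · rintro ⟨hδpos, -, hsupp, α₀, hα₀A, hα₀c⟩
      refine ⟨⟨hδpos, hsupp⟩, ?_⟩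
      rintro ⟨-, hsB'⟩
      have hα₀supp : α₀ ∈ R.support δ := R.mem_support_iff.mpr ⟨hA hα₀A, ne_of_gt hα₀c⟩
      exact (Finset.disjoint_left.mp hAB' hα₀A) (hsB' hα₀supp)
    · rintro ⟨⟨hδpos, hsupp⟩, hnot⟩
      refine ⟨hδpos, hδpos, hsupp, ?_⟩
      have : ∃ x ∈ R.support δ, x ∉ B' := by
        by_contra hc
        push_neg at hc
        exact hnot ⟨hδpos, hc⟩
      obtain ⟨x, hxsupp, hxnB'⟩ := this
      have hxA : x ∈ A := by
        rcases Finset.mem_union.mp (hsupp hxsupp) with h | h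
        · exact h
        · exact absurd h hxnB'
      obtain ⟨hxs, hxc⟩ := R.mem_support_iff.mp hxsupp
      exact ⟨x, hxA, lt_of_le_of_ne (R.pos_coeff_nonneg δ hδpos x hxs) (Ne.symm hxc)⟩
  have hQP : (R.pos.filter fun δ => R.support δ ⊆ B')
      ⊆ (R.pos.filter fun δ => R.support δ ⊆ A ∪ B') := by
    intro δ hδ
    rw [Finset.mem_filter] at hδ ⊢
    exact ⟨hδ.1, hδ.2.trans Finset.subset_union_right⟩
  rw [RootSystemData.ell, hfilter, hcount, Finset.card_sdiff_of_subset hQP]
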